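/- Assume μ_c > 0 and 0 < μ < μ_c. Then there exists a unique s_c > 0 such that s_c = N*(s_c) (the critical squared frequency). -/

import Mathlib

open MeasureTheory Set

noncomputable section

/-- A function is admissible if it is twice continuously differentiable on `[0,1]`
and vanishes at the endpoints (the C² representatives of `H₀¹(0,1) ∩ H²(0,1)`). -/
def Admissible (ψ : ℝ → ℝ) : Prop :=
  ContDiffOn ℝ 2 ψ (Set.Icc (0:ℝ) 1) ∧ ψ 0 = 0 ∧ ψ 1 = 0

/-- The boundary energy `Z(ψ) = k1·ψ′(1)² + k0·ψ′(0)²`. -/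
def Z (k0 k1 : ℝ) (ψ : ℝ → ℝ) : ℝ :=
  k1 * (deriv ψ 1) ^ 2 + k0 * (deriv ψ 0) ^ 2

/-- The Dirichlet-type energy `D(ψ) = ∫₀¹ ψ″(y)² dy`. -/
def D (ψ : ℝ → ℝ) : ℝ :=
  ∫ y in (0:ℝ)..1, (deriv (deriv ψ) y) ^ 2

/-- The set of Rayleigh quotients `Z(ψ)/D(ψ)` over admissible `ψ` with `D(ψ) ≠ 0`. -/
def mucSet (k0 k1 : ℝ) : Set ℝ :=
  { r : ℝ | ∃ ψ : ℝ → ℝ, Admissible ψ ∧ D ψ ≠ 0 ∧ r = Z k0 k1 ψ / D ψ }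

/-- The critical viscosity `μ_c`. -/
def muc (k0 k1 : ℝ) : ℝ := sSup (mucSet k0 k1)


/-- The energy functional `E_s(ψ)` (with `s = ξ²` the squared frequency). -/
def E (k0 k1 μ s : ℝ) (ψ : ℝ → ℝ) : ℝ :=
  μ / 2 * ∫ y in (0:ℝ)..1,
      ((deriv (deriv ψ) y) ^ 2 + 2 * s * (deriv ψ y) ^ 2 + s ^ 2 * (ψ y) ^ 2)
  - k1 / 2 * (deriv ψ 1) ^ 2 - k0 / 2 * (deriv ψ 0) ^ 2

/-- The constraint functional `J_s(ψ)`. -/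
def J (s : ℝ) (ψ : ℝ → ℝ) : ℝ :=
  1 / 2 * ∫ y in (0:ℝ)..1, (s * (ψ y) ^ 2 + (deriv ψ y) ^ 2)

/-- The constant `C₀ = |k1 + k0| + μ⁻¹·max(k0², k1²)`. -/
def C0 (k0 k1 μ : ℝ) : ℝ := |k1 + k0| + μ⁻¹ * max (k0 ^ 2) (k1 ^ 2)

/-- A function is nonzero on `[0,1]` if it does not vanish identically there. -/
def NonzeroOn01 (ψ : ℝ → ℝ) : Prop := ∃ y ∈ Set.Icc (0:ℝ) 1, ψ y ≠ 0

/-- The set of quotients defining the modified variational problem `N*(s)`. -/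
def NstarSet (k0 k1 μ s : ℝ) : Set ℝ :=
  { r : ℝ | ∃ ψ : ℝ → ℝ, Admissible ψ ∧ NonzeroOn01 ψ ∧
      r = (Z k0 k1 ψ - μ * D ψ) /
        (μ * ∫ y in (0:ℝ)..1, (2 * (deriv ψ y) ^ 2 + s * (ψ y) ^ 2)) }

/-- The modified variational quantity `N*(s)`. -/
def Nstar (k0 k1 μ s : ℝ) : ℝ := sSup (NstarSet k0 k1 μ s)

/-- The set of quotients `−E_s(ψ)/J_s(ψ)` defining the growth rate `λ(s)`. -/
def lamSet (k0 k1 μ s : ℝ) : Set ℝ :=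
  { r : ℝ | ∃ ψ : ℝ → ℝ, Admissible ψ ∧ NonzeroOn01 ψ ∧
      r = -E k0 k1 μ s ψ / J s ψ }

/-- The growth rate `λ(s) = sup(−E_s(ψ)/J_s(ψ))`. -/
def lam (k0 k1 μ s : ℝ) : ℝ := sSup (lamSet k0 k1 μ s)

end


open MeasureTheory Set intervalIntegral

private lemma admissible_facts (k0 k1 μ : ℝ) (hμ0 : 0 < μ) {ψ : ℝ → ℝ} (hψ : Admissible ψ) :
    (∀ s : ℝ, (∫ y in (0:ℝ)..1, (2 * (deriv ψ y)^2 + s * (ψ y)^2))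
        = 2 * (∫ y in (0:ℝ)..1, (deriv ψ y)^2) + s * ∫ y in (0:ℝ)..1, (ψ y)^2)
    ∧ 0 ≤ (∫ y in (0:ℝ)..1, (deriv ψ y)^2)
    ∧ Z k0 k1 ψ - μ * D ψ
        ≤ ((|k0|+|k1|) * (1 + (1+|k0|+|k1|)/μ)) * (2 * ∫ y in (0:ℝ)..1, (deriv ψ y)^2) := by
  obtain ⟨hC2, hψ0, hψ1⟩ := hψ
  have hud : UniqueDiffOn ℝ (Set.Icc (0:ℝ) 1) := uniqueDiffOn_Icc (by norm_num)
  set g : ℝ → ℝ := derivWithin ψ (Set.Icc (0:ℝ) 1) with hgdef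
  set h : ℝ → ℝ := derivWithin g (Set.Icc (0:ℝ) 1) with hhdef
  have hg1 : ContDiffOn ℝ 1 g (Set.Icc (0:ℝ) 1) := hC2.derivWithin hud (by norm_num)
  have hgc : ContinuousOn g (Set.Icc (0:ℝ) 1) := hg1.continuousOn
  have hhc : ContinuousOn h (Set.Icc (0:ℝ) 1) := hg1.continuousOn_derivWithin hud le_rfl
  have hψc : ContinuousOn ψ (Set.Icc (0:ℝ) 1) := hC2.continuousOn
  have hIuIcc : Set.uIcc (0:ℝ) 1 = Set.Icc (0:ℝ) 1 := by rw [Set.uIcc_of_le] ; norm_num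
  have hnhds : ∀ y ∈ Set.Ioo (0:ℝ) 1, Set.Icc (0:ℝ) 1 ∈ nhds y := fun y hy =>
    Icc_mem_nhds hy.1 hy.2
  have hψd : ∀ y ∈ Set.Ioo (0:ℝ) 1, HasDerivAt ψ (g y) y := by
    intro y hy
    have := (hC2.differentiableOn (by norm_num)) y (Set.Ioo_subset_Icc_self hy)
    exact (this.hasDerivWithinAt).hasDerivAt (hnhds y hy)
  have hgd : ∀ y ∈ Set.Ioo (0:ℝ) 1, HasDerivAt g (h y) y := by
    intro y hy
    have := (hg1.differentiableOn (by norm_num)) y (Set.Ioo_subset_Icc_self hy)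
    exact (this.hasDerivWithinAt).hasDerivAt (hnhds y hy)
  have hderiv_eq : ∀ y ∈ Set.Ioo (0:ℝ) 1, deriv ψ y = g y := fun y hy => (hψd y hy).deriv
  have hderiv2_eq : ∀ y ∈ Set.Ioo (0:ℝ) 1, deriv (deriv ψ) y = h y := by
    intro y hy
    have hev : deriv ψ =ᶠ[nhds y] g := by
      filter_upwards [Ioo_mem_nhds hy.1 hy.2] with t ht
      exact hderiv_eq t ht
    rw [hev.deriv_eq]
    exact (hgd y hy).deriv
  have hae : ∀ᵐ x : ℝ, x ∈ Set.uIoc (0:ℝ) 1 → x ∈ Set.Ioo (0:ℝ) 1 := by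
    have h1 : ∀ᵐ x : ℝ, x ≠ (1:ℝ) := by
      rw [ae_iff]
      simp
    filter_upwards [h1] with x hx hmem
    rw [Set.uIoc_of_le (by norm_num : (0:ℝ) ≤ 1)] at hmem
    exact ⟨hmem.1, lt_of_le_of_ne hmem.2 hx⟩
  -- integrability
  have hint_g : IntervalIntegrable (fun y => (g y)^2) volume 0 1 := by
    apply ContinuousOn.intervalIntegrable; rw [hIuIcc]; exact hgc.pow 2
  have hint_h : IntervalIntegrable (fun y => (h y)^2) volume 0 1 := by
    apply ContinuousOn.intervalIntegrable; rw [hIuIcc]; exact hhc.pow 2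
  have hint_ψ : IntervalIntegrable (fun y => (ψ y)^2) volume 0 1 := by
    apply ContinuousOn.intervalIntegrable; rw [hIuIcc]; exact hψc.pow 2
  have hBeq : (∫ y in (0:ℝ)..1, (deriv ψ y)^2) = ∫ y in (0:ℝ)..1, (g y)^2 :=
    integral_congr_ae (by filter_upwards [hae] with x hx hmem; rw [hderiv_eq x (hx hmem)])
  have hDeq : D ψ = ∫ y in (0:ℝ)..1, (h y)^2 := by
    unfold D
    exact integral_congr_ae (by filter_upwards [hae] with x hx hmem; rw [hderiv2_eq x (hx hmem)])
  have hsplit : ∀ s : ℝ, (∫ y in (0:ℝ)..1, (2 * (deriv ψ y)^2 + s * (ψ y)^2))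
      = 2 * (∫ y in (0:ℝ)..1, (deriv ψ y)^2) + s * ∫ y in (0:ℝ)..1, (ψ y)^2 := by
    intro s
    have e1 : (∫ y in (0:ℝ)..1, (2 * (deriv ψ y)^2 + s * (ψ y)^2))
        = ∫ y in (0:ℝ)..1, (2 * (g y)^2 + s * (ψ y)^2) :=
      integral_congr_ae (by filter_upwards [hae] with x hx hmem; rw [hderiv_eq x (hx hmem)])
    rw [e1, integral_add (hint_g.const_mul 2) (hint_ψ.const_mul s),
      intervalIntegral.integral_const_mul, intervalIntegral.integral_const_mul, hBeq]
  have hBnn : 0 ≤ (∫ y in (0:ℝ)..1, (deriv ψ y)^2) :=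
    intervalIntegral.integral_nonneg (by norm_num) (fun u _ => sq_nonneg _)
  refine ⟨hsplit, hBnn, ?_⟩
  -- the key estimate
  set K : ℝ := |k0| + |k1| with hKdef
  have hK0 : 0 ≤ K := by positivity
  set ε : ℝ := μ / (1 + K) with hεdef
  set δ : ℝ := (1 + K) / μ with hδdef
  have hε : 0 < ε := by positivity
  have hδ : 0 < δ := by positivity
  have hδε : δ * ε = 1 := by rw [hδdef, hεdef]; field_simp
  have hKε : K * ε ≤ μ := by
    have h1 : ε * (1 + K) = μ := by rw [hεdef]; field_simp
    nlinarith [hε]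
  set w : ℝ → ℝ := fun t => δ * (g t)^2 + ε * (h t)^2 with hwdef
  have hwc : ContinuousOn w (Set.Icc (0:ℝ) 1) :=
    ((hgc.pow 2).const_smul δ).add ((hhc.pow 2).const_smul ε)
  have hint_w : IntervalIntegrable w volume 0 1 := by
    apply ContinuousOn.intervalIntegrable; rw [hIuIcc]; exact hwc
  have hwnn : ∀ t, 0 ≤ w t := fun t => by
    show 0 ≤ δ * (g t)^2 + ε * (h t)^2
    positivity
  have hamgm : ∀ t, -(w t) ≤ 2 * g t * h t ∧ 2 * g t * h t ≤ w t := by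
    intro t
    have e1 : δ * (g t - ε * h t)^2
        = δ * (g t)^2 - 2 * (δ*ε) * (g t * h t) + (δ*ε) * (ε * (h t)^2) := by ring
    have e2 : δ * (g t + ε * h t)^2
        = δ * (g t)^2 + 2 * (δ*ε) * (g t * h t) + (δ*ε) * (ε * (h t)^2) := by ring
    rw [hδε] at e1 e2
    have hwt : w t = δ * (g t)^2 + ε * (h t)^2 := rfl
    constructor
    · nlinarith [mul_nonneg hδ.le (sq_nonneg (g t + ε * h t)), hwt]
    · nlinarith [mul_nonneg hδ.le (sq_nonneg (g t - ε * h t)), hwt]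
  set W : ℝ := ∫ y in (0:ℝ)..1, w y with hWdef
  have hghint : IntervalIntegrable (fun t => 2 * g t * h t) volume 0 1 := by
    apply ContinuousOn.intervalIntegrable; rw [hIuIcc]
    exact (continuousOn_const.mul hgc).mul hhc
  have hsub : ∀ y ∈ Set.Icc (0:ℝ) 1, Set.uIcc (0:ℝ) y ⊆ Set.uIcc (0:ℝ) 1 ∧
      Set.uIcc y 1 ⊆ Set.uIcc (0:ℝ) 1 := by
    intro y hy
    constructor
    · rw [Set.uIcc_of_le hy.1, hIuIcc]; exact Set.Icc_subset_Icc le_rfl hy.2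
    · rw [Set.uIcc_of_le hy.2, hIuIcc]; exact Set.Icc_subset_Icc hy.1 le_rfl
  have hFTC : ∀ y ∈ Set.Icc (0:ℝ) 1, ∀ z ∈ Set.Icc (0:ℝ) 1, y ≤ z →
      (∫ t in y..z, 2 * g t * h t) = (g z)^2 - (g y)^2 := by
    intro y hy z hz hyz
    apply intervalIntegral.integral_eq_sub_of_hasDeriv_right_of_le hyz
    · exact (hgc.mono (Set.Icc_subset_Icc hy.1 hz.2)).pow 2
    · intro x hx
      have hxI : x ∈ Set.Ioo (0:ℝ) 1 := ⟨lt_of_le_of_lt hy.1 hx.1, lt_of_lt_of_le hx.2 hz.2⟩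
      have := ((hgd x hxI).fun_pow 2)
      have h2 : HasDerivAt (fun u => (g u)^2) (2 * g x * h x) x := by
        exact this.congr_deriv (by norm_num)
      exact h2.hasDerivWithinAt
    · exact hghint.mono_set (by rw [Set.uIcc_of_le hyz, hIuIcc]; exact Set.Icc_subset_Icc hy.1 hz.2)
  have hWsplit : ∀ y ∈ Set.Icc (0:ℝ) 1,
      (∫ t in (0:ℝ)..y, w t) + (∫ t in y..1, w t) = W := by
    intro y hy
    exact integral_add_adjacent_intervals (hint_w.mono_set (hsub y hy).1)
      (hint_w.mono_set (hsub y hy).2)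
  have hC1 : ∀ y ∈ Set.Icc (0:ℝ) 1, (g 0)^2 ≤ (g y)^2 + W := by
    intro y hy
    have e1 := hFTC 0 (by norm_num) y hy hy.1
    have e2 : -(∫ t in (0:ℝ)..y, w t) ≤ ∫ t in (0:ℝ)..y, 2 * g t * h t := by
      rw [← intervalIntegral.integral_neg]
      exact integral_mono_on hy.1 ((hint_w.mono_set (hsub y hy).1).neg)
        (hghint.mono_set (hsub y hy).1) (fun t _ => (hamgm t).1)
    have e3 : 0 ≤ ∫ t in y..1, w t :=
      intervalIntegral.integral_nonneg hy.2 (fun u _ => hwnn u)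
    have e4 := hWsplit y hy
    linarith
  have hC2' : ∀ y ∈ Set.Icc (0:ℝ) 1, (g 1)^2 ≤ (g y)^2 + W := by
    intro y hy
    have e1 := hFTC y hy 1 (by norm_num) hy.2
    have e2 : (∫ t in y..1, 2 * g t * h t) ≤ ∫ t in y..1, w t :=
      integral_mono_on hy.2 (hghint.mono_set (hsub y hy).2)
        (hint_w.mono_set (hsub y hy).2) (fun t _ => (hamgm t).2)
    have e3 : 0 ≤ ∫ t in (0:ℝ)..y, w t :=
      intervalIntegral.integral_nonneg hy.1 (fun u _ => hwnn u)
    have e4 := hWsplit y hy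
    linarith
  set Bq : ℝ := ∫ y in (0:ℝ)..1, (g y)^2 with hBqdef
  have hint_gW : IntervalIntegrable (fun y => (g y)^2 + W) volume 0 1 :=
    hint_g.add intervalIntegrable_const
  have hg0 : (g 0)^2 ≤ Bq + W := by
    have e1 : (g 0)^2 = ∫ y in (0:ℝ)..1, (fun _ : ℝ => (g 0)^2) y := by
      simp
    rw [e1]
    have e2 : (∫ y in (0:ℝ)..1, ((g y)^2 + W)) = Bq + W := by
      rw [integral_add hint_g intervalIntegrable_const]; simp [hBqdef]
    rw [← e2]
    exact integral_mono_on (by norm_num) intervalIntegrable_const hint_gW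
      (fun x hx => hC1 x hx)
  have hg1' : (g 1)^2 ≤ Bq + W := by
    have e1 : (g 1)^2 = ∫ y in (0:ℝ)..1, (fun _ : ℝ => (g 1)^2) y := by
      simp
    rw [e1]
    have e2 : (∫ y in (0:ℝ)..1, ((g y)^2 + W)) = Bq + W := by
      rw [integral_add hint_g intervalIntegrable_const]; simp [hBqdef]
    rw [← e2]
    exact integral_mono_on (by norm_num) intervalIntegrable_const hint_gW
      (fun x hx => hC2' x hx)
  -- boundary values of deriv ψ versus g
  have hb : ∀ x, x ∈ Set.Icc (0:ℝ) 1 → (deriv ψ x)^2 ≤ (g x)^2 := by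
    intro x hx
    by_cases hdx : DifferentiableAt ℝ ψ x
    · rw [hgdef, hdx.derivWithin (hud x hx)]
    · rw [deriv_zero_of_not_differentiableAt hdx]
      simpa using sq_nonneg (g x)
  set Hq : ℝ := ∫ y in (0:ℝ)..1, (h y)^2 with hHqdef
  have hWval : W = δ * Bq + ε * Hq := by
    rw [hWdef, hwdef, integral_add (hint_g.const_mul δ) (hint_h.const_mul ε),
      intervalIntegral.integral_const_mul, intervalIntegral.integral_const_mul]
  have hHnn : 0 ≤ Hq :=
    intervalIntegral.integral_nonneg (by norm_num) (fun u _ => sq_nonneg _)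
  have hBqnn : 0 ≤ Bq :=
    intervalIntegral.integral_nonneg (by norm_num) (fun u _ => sq_nonneg _)
  -- final estimate
  have hZ : Z k0 k1 ψ ≤ K * (Bq + W) := by
    have h0 := hb 0 (by norm_num)
    have h1 := hb 1 (by norm_num)
    have e0 : k0 * (deriv ψ 0)^2 ≤ |k0| * (Bq + W) := by
      calc k0 * (deriv ψ 0)^2 ≤ |k0| * (deriv ψ 0)^2 :=
            mul_le_mul_of_nonneg_right (le_abs_self k0) (sq_nonneg _)
        _ ≤ |k0| * (Bq + W) := by
            apply mul_le_mul_of_nonneg_left _ (abs_nonneg k0)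
            exact le_trans h0 hg0
    have e1 : k1 * (deriv ψ 1)^2 ≤ |k1| * (Bq + W) := by
      calc k1 * (deriv ψ 1)^2 ≤ |k1| * (deriv ψ 1)^2 :=
            mul_le_mul_of_nonneg_right (le_abs_self k1) (sq_nonneg _)
        _ ≤ |k1| * (Bq + W) := by
            apply mul_le_mul_of_nonneg_left _ (abs_nonneg k1)
            exact le_trans h1 hg1'
    unfold Z
    rw [hKdef]
    linarith
  rw [hBeq, hDeq]
  have eδ : (1 + |k0| + |k1|) / μ = δ := by rw [hδdef, hKdef]; ring
  rw [eδ]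
  have hfin : K * (Bq + W) - μ * Hq ≤ K * (1 + δ) * (2 * Bq) := by
    rw [hWval]
    have : K * ε ≤ μ := hKε
    nlinarith [mul_nonneg hK0 hBqnn, mul_nonneg hK0 (mul_nonneg hδ.le hBqnn),
      mul_nonneg (sub_nonneg.2 hKε) hHnn]
  calc Z k0 k1 ψ - μ * Hq ≤ K * (Bq + W) - μ * Hq := by linarith [hZ]
    _ ≤ K * (1 + δ) * (2 * Bq) := hfin


private lemma D_zero_of_zero {ψ : ℝ → ℝ} (h : ∀ y ∈ Set.Icc (0:ℝ) 1, ψ y = 0) :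
    D ψ = 0 := by
  have h1 : ∀ y ∈ Set.Ioo (0:ℝ) 1, deriv ψ y = 0 := by
    intro y hy
    have hev : ψ =ᶠ[nhds y] (fun _ => (0:ℝ)) := by
      filter_upwards [Ioo_mem_nhds hy.1 hy.2] with t ht
      exact h t (Set.Ioo_subset_Icc_self ht)
    rw [hev.deriv_eq, deriv_const]
  have h2 : ∀ y ∈ Set.Ioo (0:ℝ) 1, deriv (deriv ψ) y = 0 := by
    intro y hy
    have hev : deriv ψ =ᶠ[nhds y] (fun _ => (0:ℝ)) := by
      filter_upwards [Ioo_mem_nhds hy.1 hy.2] with t ht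
      exact h1 t ht
    rw [hev.deriv_eq, deriv_const]
  have hae : ∀ᵐ x : ℝ, x ∈ Set.uIoc (0:ℝ) 1 → x ∈ Set.Ioo (0:ℝ) 1 := by
    have hone : ∀ᵐ x : ℝ, x ≠ (1:ℝ) := by rw [ae_iff]; simp
    filter_upwards [hone] with x hx hmem
    rw [Set.uIoc_of_le (by norm_num : (0:ℝ) ≤ 1)] at hmem
    exact ⟨hmem.1, lt_of_le_of_ne hmem.2 hx⟩
  unfold D
  rw [intervalIntegral.integral_congr_ae (g := fun _ => (0:ℝ))
    (by filter_upwards [hae] with x hx hmem; rw [h2 x (hx hmem)]; norm_num)]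
  simp

private lemma nonzero_pos_integral {ψ : ℝ → ℝ} (hψ : Admissible ψ) (hnz : NonzeroOn01 ψ) :
    0 < ∫ y in (0:ℝ)..1, (ψ y)^2 := by
  obtain ⟨hC2, hψ0, hψ1⟩ := hψ
  obtain ⟨y, hyI, hyne⟩ := hnz
  have hψc : ContinuousOn ψ (Set.Icc (0:ℝ) 1) := hC2.continuousOn
  have hy0 : y ≠ 0 := fun hc => hyne (by rw [hc, hψ0])
  have hy1 : y ≠ 1 := fun hc => hyne (by rw [hc, hψ1])
  have hy : y ∈ Set.Ioo (0:ℝ) 1 := ⟨lt_of_le_of_ne hyI.1 (Ne.symm hy0), lt_of_le_of_ne hyI.2 hy1⟩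
  have hca : ContinuousAt ψ y := hψc.continuousAt (Icc_mem_nhds hy.1 hy.2)
  have hca2 : ContinuousAt (fun t => (ψ t)^2) y := hca.pow 2
  have hpos : 0 < (ψ y)^2 := by positivity
  have hev : ∀ᶠ t in nhds y, (ψ y)^2 / 2 < (ψ t)^2 :=
    hca2.eventually (eventually_gt_nhds (by linarith))
  rw [Metric.eventually_nhds_iff] at hev
  obtain ⟨e, he, hball⟩ := hev
  set d : ℝ := min (e/2) (min (y/2) ((1-y)/2)) with hddef
  have hd : 0 < d := by
    apply lt_min (by linarith)
    apply lt_min <;> [skip; skip] <;> linarith [hy.1, hy.2]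
  have hd1 : y - d ≥ 0 := by
    have : d ≤ y/2 := le_trans (min_le_right _ _) (min_le_left _ _)
    linarith [hy.1]
  have hd2 : y + d ≤ 1 := by
    have : d ≤ (1-y)/2 := le_trans (min_le_right _ _) (min_le_right _ _)
    linarith [hy.2]
  have hde : d < e := by
    have : d ≤ e/2 := min_le_left _ _
    linarith
  have hIuIcc : Set.uIcc (0:ℝ) 1 = Set.Icc (0:ℝ) 1 := by rw [Set.uIcc_of_le]; norm_num
  have hint : IntervalIntegrable (fun t => (ψ t)^2) volume 0 1 := by
    apply ContinuousOn.intervalIntegrable; rw [hIuIcc]; exact hψc.pow 2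
  have hsub1 : Set.uIcc (0:ℝ) (y-d) ⊆ Set.uIcc (0:ℝ) 1 := by
    rw [Set.uIcc_of_le hd1, hIuIcc]; exact Set.Icc_subset_Icc le_rfl (by linarith)
  have hsub2 : Set.uIcc (y-d) (y+d) ⊆ Set.uIcc (0:ℝ) 1 := by
    rw [Set.uIcc_of_le (by linarith), hIuIcc]; exact Set.Icc_subset_Icc hd1 hd2
  have hsub3 : Set.uIcc (y+d) 1 ⊆ Set.uIcc (0:ℝ) 1 := by
    rw [Set.uIcc_of_le hd2, hIuIcc]; exact Set.Icc_subset_Icc (by linarith) le_rfl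
  have e1 : (∫ t in (0:ℝ)..(y-d), (ψ t)^2) + (∫ t in (y-d)..(y+d), (ψ t)^2)
      = ∫ t in (0:ℝ)..(y+d), (ψ t)^2 :=
    integral_add_adjacent_intervals (hint.mono_set hsub1) (hint.mono_set hsub2)
  have e2 : (∫ t in (0:ℝ)..(y+d), (ψ t)^2) + (∫ t in (y+d)..1, (ψ t)^2)
      = ∫ t in (0:ℝ)..1, (ψ t)^2 :=
    integral_add_adjacent_intervals
      ((hint.mono_set hsub1).trans (hint.mono_set hsub2)) (hint.mono_set hsub3)
  have e3 : 0 ≤ ∫ t in (0:ℝ)..(y-d), (ψ t)^2 :=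
    intervalIntegral.integral_nonneg hd1 (fun u _ => sq_nonneg _)
  have e4 : 0 ≤ ∫ t in (y+d)..1, (ψ t)^2 :=
    intervalIntegral.integral_nonneg hd2 (fun u _ => sq_nonneg _)
  have e5 : (∫ t in (y-d)..(y+d), (fun _ : ℝ => (ψ y)^2/2) t) ≤ ∫ t in (y-d)..(y+d), (ψ t)^2 := by
    apply integral_mono_on (by linarith) intervalIntegrable_const (hint.mono_set hsub2)
    intro x hx
    have : dist x y < e := by
      rw [Real.dist_eq, abs_lt]
      constructor <;> [linarith [hx.1]; linarith [hx.2]]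
    exact (hball this).le
  have e6 : (∫ t in (y-d)..(y+d), (fun _ : ℝ => (ψ y)^2/2) t) = (2*d) * ((ψ y)^2/2) := by
    rw [intervalIntegral.integral_const, smul_eq_mul]
    ring
  have : 0 < (2*d) * ((ψ y)^2/2) := by positivity
  linarith


private lemma root_exists (μ a b c : ℝ) (hμ : 0 < μ) (ha : 0 < a) (hb : 0 ≤ b) (hc : 0 < c) :
    ∃ t : ℝ, 0 < t ∧ μ * (t * (b + t * c)) = a := by
  set S := Real.sqrt (b^2 + 4*c*a/μ) with hSdef
  have harg : 0 < b^2 + 4*c*a/μ := by positivity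
  have hS2 : S^2 = b^2 + 4*c*a/μ := Real.sq_sqrt harg.le
  have hS0 : 0 ≤ S := Real.sqrt_nonneg _
  have h4 : 0 < 4*c*a/μ := by positivity
  have hSb : b < S := by nlinarith [h4]
  refine ⟨(S - b)/(2*c), div_pos (by linarith) (by linarith), ?_⟩
  have key : μ * ((S - b)/(2*c) * (b + (S - b)/(2*c) * c)) = μ * ((S^2 - b^2)/(4*c)) := by
    field_simp
    ring
  rw [key, hS2]
  field_simp
  ring

private noncomputable def Aq (k0 k1 μ : ℝ) (ψ : ℝ → ℝ) : ℝ := Z k0 k1 ψ - μ * D ψ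
private noncomputable def Bq (ψ : ℝ → ℝ) : ℝ := ∫ y in (0:ℝ)..1, (deriv ψ y)^2
private noncomputable def Cq (ψ : ℝ → ℝ) : ℝ := ∫ y in (0:ℝ)..1, (ψ y)^2

private lemma NstarSet_eq (k0 k1 μ : ℝ) (hμ0 : 0 < μ) (s : ℝ) :
    NstarSet k0 k1 μ s = {r | ∃ ψ : ℝ → ℝ, Admissible ψ ∧ NonzeroOn01 ψ ∧
      r = Aq k0 k1 μ ψ / (μ * (2 * Bq ψ + s * Cq ψ))} := by
  ext r
  constructor <;> rintro ⟨ψ, hψ, hnz, hre⟩ <;> refine ⟨ψ, hψ, hnz, ?_⟩ <;>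
    rw [hre] <;> unfold Aq Bq Cq <;>
    rw [(admissible_facts k0 k1 μ hμ0 hψ).1 s]

/-- the set of individual dispersion roots -/
private def rootSet (k0 k1 μ : ℝ) : Set ℝ :=
  {t | ∃ ψ : ℝ → ℝ, Admissible ψ ∧ NonzeroOn01 ψ ∧ 0 < t ∧
      μ * (t * (2 * Bq ψ + t * Cq ψ)) = Aq k0 k1 μ ψ}

set_option maxHeartbeats 2000000 in
/-- if `μ_c > 0` and `0 < μ < μ_c`, there exists a unique critical
squared frequency `s_c > 0` with `s_c = N*(s_c)`. -/
theorem exists_unique_critical_frequency (k0 k1 μ : ℝ) (hmuc : 0 < muc k0 k1)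
    (hμ0 : 0 < μ) (hμ : μ < muc k0 k1) :
    ∃! sc : ℝ, 0 < sc ∧ sc = Nstar k0 k1 μ sc := by
  classical
  set KK : ℝ := (|k0| + |k1|) * (1 + (1 + |k0| + |k1|)/μ) with hKKdef
  have hKK0 : 0 ≤ KK := by positivity
  have hBnn : ∀ ψ : ℝ → ℝ, Admissible ψ → 0 ≤ Bq ψ :=
    fun ψ hψ => (admissible_facts k0 k1 μ hμ0 hψ).2.1
  have hAle : ∀ ψ : ℝ → ℝ, Admissible ψ → Aq k0 k1 μ ψ ≤ KK * (2 * Bq ψ) :=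
    fun ψ hψ => (admissible_facts k0 k1 μ hμ0 hψ).2.2
  have hCpos : ∀ ψ : ℝ → ℝ, Admissible ψ → NonzeroOn01 ψ → 0 < Cq ψ :=
    fun ψ hψ hnz => nonzero_pos_integral hψ hnz
  -- the distinguished test function coming from μ < μ_c
  have hμc_el : ∃ r ∈ mucSet k0 k1, μ < r := by
    rcases Set.eq_empty_or_nonempty (mucSet k0 k1) with he | hne
    · exfalso; rw [muc, he, Real.sSup_empty] at hmuc; exact lt_irrefl 0 hmuc
    by_cases hbdd : BddAbove (mucSet k0 k1)
    · exact exists_lt_of_lt_csSup hne hμ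
    · exfalso; rw [muc, Real.sSup_of_not_bddAbove hbdd] at hmuc; exact lt_irrefl 0 hmuc
  obtain ⟨r0, ⟨ψ₀, hψ₀, hD0, hre⟩, hμr⟩ := hμc_el
  have hD0pos : 0 < D ψ₀ :=
    lt_of_le_of_ne (intervalIntegral.integral_nonneg (by norm_num) fun u _ => sq_nonneg _)
      (Ne.symm hD0)
  have hA0 : 0 < Aq k0 k1 μ ψ₀ := by
    have h1 : μ < Z k0 k1 ψ₀ / D ψ₀ := hre ▸ hμr
    have := (lt_div_iff₀ hD0pos).mp h1
    unfold Aq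
    linarith
  have hnz0 : NonzeroOn01 ψ₀ := by
    by_contra hcon
    apply hD0
    apply D_zero_of_zero
    intro y hy
    by_contra hne
    exact hcon ⟨y, hy, hne⟩
  -- the root set
  have hTub : ∀ t ∈ rootSet k0 k1 μ, t ≤ KK / μ := by
    rintro t ⟨ψ, hψ, hnz, ht0, heq⟩
    have hBn := hBnn ψ hψ
    have hCp := hCpos ψ hψ hnz
    have hden : 0 < 2 * Bq ψ + t * Cq ψ := by nlinarith
    have h1 : μ * t ≤ KK := by
      nlinarith [hAle ψ hψ, mul_nonneg hKK0 (mul_pos ht0 hCp).le, mul_pos ht0 hCp]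
    rw [le_div_iff₀ hμ0]
    linarith
  have hTbdd : BddAbove (rootSet k0 k1 μ) := ⟨KK/μ, fun t ht => hTub t ht⟩
  obtain ⟨t₀, ht₀0, ht₀eq⟩ := root_exists μ (Aq k0 k1 μ ψ₀) (2 * Bq ψ₀) (Cq ψ₀) hμ0 hA0
      (by nlinarith [hBnn ψ₀ hψ₀]) (hCpos ψ₀ hψ₀ hnz0)
  have ht₀T : t₀ ∈ rootSet k0 k1 μ := ⟨ψ₀, hψ₀, hnz0, ht₀0, ht₀eq⟩
  have hTne : (rootSet k0 k1 μ).Nonempty := ⟨t₀, ht₀T⟩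
  set σ : ℝ := sSup (rootSet k0 k1 μ) with hσ
  have hσpos : 0 < σ := lt_of_lt_of_le ht₀0 (le_csSup hTbdd ht₀T)
  -- upper bound for NstarSet
  have hNub : ∀ s : ℝ, 0 < s → ∀ r ∈ NstarSet k0 k1 μ s, r ≤ KK / μ := by
    intro s hs r hr
    rw [NstarSet_eq k0 k1 μ hμ0 s] at hr
    obtain ⟨ψ, hψ, hnz, hre'⟩ := hr
    have hBn := hBnn ψ hψ
    have hCp := hCpos ψ hψ hnz
    have hden : 0 < μ * (2 * Bq ψ + s * Cq ψ) := by
      apply mul_pos hμ0; nlinarith [mul_pos hs hCp]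
    rw [hre']
    rcases le_or_gt (Aq k0 k1 μ ψ) 0 with hA | hA
    · have : Aq k0 k1 μ ψ / (μ * (2 * Bq ψ + s * Cq ψ)) ≤ 0 :=
        div_nonpos_iff.mpr (Or.inr ⟨hA, hden.le⟩)
      have : 0 ≤ KK / μ := by positivity
      linarith
    · rw [div_le_div_iff₀ hden hμ0]
      nlinarith [mul_le_mul_of_nonneg_right (hAle ψ hψ) hμ0.le,
        mul_nonneg hKK0 (mul_nonneg hμ0.le (mul_pos hs hCp).le)]
  have hNbdd : ∀ s : ℝ, 0 < s → BddAbove (NstarSet k0 k1 μ s) :=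
    fun s hs => ⟨KK/μ, fun r hr => hNub s hs r hr⟩
  have hNne : ∀ s : ℝ, (NstarSet k0 k1 μ s).Nonempty := by
    intro s
    refine ⟨Aq k0 k1 μ ψ₀ / (μ * (2 * Bq ψ₀ + s * Cq ψ₀)), ?_⟩
    rw [NstarSet_eq k0 k1 μ hμ0 s]
    exact ⟨ψ₀, hψ₀, hnz0, rfl⟩
  -- (a) Nstar σ ≤ σ
  have ha : Nstar k0 k1 μ σ ≤ σ := by
    apply Real.sSup_le _ hσpos.le
    intro r hr
    rw [NstarSet_eq k0 k1 μ hμ0 σ] at hr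
    obtain ⟨ψ, hψ, hnz, hre'⟩ := hr
    have hBn := hBnn ψ hψ
    have hCp := hCpos ψ hψ hnz
    have hden : 0 < μ * (2 * Bq ψ + σ * Cq ψ) := by
      apply mul_pos hμ0; nlinarith [mul_pos hσpos hCp]
    rw [hre']
    rcases le_or_gt (Aq k0 k1 μ ψ) 0 with hA | hA
    · have : Aq k0 k1 μ ψ / (μ * (2 * Bq ψ + σ * Cq ψ)) ≤ 0 :=
        div_nonpos_iff.mpr (Or.inr ⟨hA, hden.le⟩)
      linarith
    · obtain ⟨t, ht0, hteq⟩ := root_exists μ (Aq k0 k1 μ ψ) (2 * Bq ψ) (Cq ψ) hμ0 hA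
        (by nlinarith) hCp
      have htT : t ∈ rootSet k0 k1 μ := ⟨ψ, hψ, hnz, ht0, hteq⟩
      have htσ : t ≤ σ := le_csSup hTbdd htT
      rw [div_le_iff₀ hden]
      have hin : t * (2 * Bq ψ + t * Cq ψ) ≤ σ * (2 * Bq ψ + σ * Cq ψ) := by
        nlinarith [mul_nonneg (sub_nonneg.2 htσ)
          (show (0:ℝ) ≤ 2 * Bq ψ + (σ + t) * Cq ψ by nlinarith)]
      nlinarith [mul_le_mul_of_nonneg_left hin hμ0.le]
  -- (b) σ ≤ Nstar σ
  have hb : σ ≤ Nstar k0 k1 μ σ := by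
    apply le_of_forall_pos_le_add
    intro ε hε
    set η : ℝ := min (ε/2) (σ/2) with hηdef
    have hη : 0 < η := lt_min (by linarith) (by linarith)
    have hη1 : η ≤ ε/2 := min_le_left _ _
    have hη2 : η ≤ σ/2 := min_le_right _ _
    obtain ⟨t, htT, htgt⟩ := exists_lt_of_lt_csSup hTne (show σ - η < σ by linarith)
    have htσ : t ≤ σ := le_csSup hTbdd htT
    obtain ⟨ψ, hψ, hnz, ht0, hteq⟩ := htT
    have hBn := hBnn ψ hψ
    have hCp := hCpos ψ hψ hnz
    have hden : 0 < μ * (2 * Bq ψ + σ * Cq ψ) := by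
      apply mul_pos hμ0; nlinarith [mul_pos hσpos hCp]
    have hmem : Aq k0 k1 μ ψ / (μ * (2 * Bq ψ + σ * Cq ψ)) ∈ NstarSet k0 k1 μ σ := by
      rw [NstarSet_eq k0 k1 μ hμ0 σ]
      exact ⟨ψ, hψ, hnz, rfl⟩
    have hle : Aq k0 k1 μ ψ / (μ * (2 * Bq ψ + σ * Cq ψ)) ≤ Nstar k0 k1 μ σ :=
      le_csSup (hNbdd σ hσpos) hmem
    have hkey : σ - 2*η ≤ Aq k0 k1 μ ψ / (μ * (2 * Bq ψ + σ * Cq ψ)) := by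
      rw [le_div_iff₀ hden]
      have h1 : (σ-η) * (2 * Bq ψ + (σ-η) * Cq ψ) ≤ t * (2 * Bq ψ + t * Cq ψ) := by
        nlinarith [mul_nonneg (show (0:ℝ) ≤ t - (σ-η) by linarith)
          (show (0:ℝ) ≤ 2 * Bq ψ + (t + (σ-η)) * Cq ψ by nlinarith)]
      have h2 : (σ-2*η) * (2 * Bq ψ + σ * Cq ψ) ≤ (σ-η) * (2 * Bq ψ + (σ-η) * Cq ψ) := by
        nlinarith [mul_nonneg hη.le hBn, mul_nonneg (mul_nonneg hη.le hη.le) hCp.le]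
      have h3 := mul_le_mul_of_nonneg_left (h2.trans h1) hμ0.le
      nlinarith [h3, hteq]
    linarith
  have hfixσ : σ = Nstar k0 k1 μ σ := le_antisymm hb ha
  refine ⟨σ, ⟨hσpos, hfixσ⟩, ?_⟩
  rintro s ⟨hs, hsfix⟩
  -- uniqueness: s = σ
  have hu1 : σ ≤ s := by
    apply Real.sSup_le _ hs.le
    rintro t ⟨ψ, hψ, hnz, ht0, hteq⟩
    have hBn := hBnn ψ hψ
    have hCp := hCpos ψ hψ hnz
    have hden : 0 < μ * (2 * Bq ψ + s * Cq ψ) := by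
      apply mul_pos hμ0; nlinarith [mul_pos hs hCp]
    have hmem : Aq k0 k1 μ ψ / (μ * (2 * Bq ψ + s * Cq ψ)) ∈ NstarSet k0 k1 μ s := by
      rw [NstarSet_eq k0 k1 μ hμ0 s]
      exact ⟨ψ, hψ, hnz, rfl⟩
    have hle : Aq k0 k1 μ ψ / (μ * (2 * Bq ψ + s * Cq ψ)) ≤ s := by
      calc Aq k0 k1 μ ψ / (μ * (2 * Bq ψ + s * Cq ψ)) ≤ Nstar k0 k1 μ s :=
            le_csSup (hNbdd s hs) hmem
        _ = s := hsfix.symm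
    have hAq : Aq k0 k1 μ ψ ≤ s * (μ * (2 * Bq ψ + s * Cq ψ)) := (div_le_iff₀ hden).mp hle
    by_contra hts
    push_neg at hts
    nlinarith [mul_pos (sub_pos.2 hts) (show (0:ℝ) < 2 * Bq ψ + (t + s) * Cq ψ by nlinarith)]
  have hu2 : s ≤ σ := by
    apply le_of_forall_pos_le_add
    intro ε hε
    set η : ℝ := min ε (s/2) with hηdef
    have hη : 0 < η := lt_min hε (by linarith)
    have hη1 : η ≤ ε := min_le_left _ _
    have hη2 : η ≤ s/2 := min_le_right _ _
    have hlt : s - η < sSup (NstarSet k0 k1 μ s) := by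
      rw [← Nstar, ← hsfix]; linarith
    obtain ⟨r, hrmem, hrgt⟩ := exists_lt_of_lt_csSup (hNne s) hlt
    rw [NstarSet_eq k0 k1 μ hμ0 s] at hrmem
    obtain ⟨ψ, hψ, hnz, hre'⟩ := hrmem
    have hBn := hBnn ψ hψ
    have hCp := hCpos ψ hψ hnz
    have hden : 0 < μ * (2 * Bq ψ + s * Cq ψ) := by
      apply mul_pos hμ0; nlinarith [mul_pos hs hCp]
    have hAgt : (s - η) * (μ * (2 * Bq ψ + s * Cq ψ)) < Aq k0 k1 μ ψ := by
      rw [← lt_div_iff₀ hden]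
      rw [hre'] at hrgt
      exact hrgt
    have hA : 0 < Aq k0 k1 μ ψ := by nlinarith
    obtain ⟨t, ht0, hteq⟩ := root_exists μ (Aq k0 k1 μ ψ) (2 * Bq ψ) (Cq ψ) hμ0 hA
      (by nlinarith) hCp
    have htT : t ∈ rootSet k0 k1 μ := ⟨ψ, hψ, hnz, ht0, hteq⟩
    have htσ : t ≤ σ := le_csSup hTbdd htT
    have htgt : s - η < t := by
      by_contra hc
      push_neg at hc
      have i1 : t * (2 * Bq ψ + t * Cq ψ) ≤ (s-η) * (2 * Bq ψ + t * Cq ψ) :=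
        mul_le_mul_of_nonneg_right hc (by nlinarith)
      have i2 : (s-η) * (2 * Bq ψ + t * Cq ψ) ≤ (s-η) * (2 * Bq ψ + s * Cq ψ) := by
        apply mul_le_mul_of_nonneg_left _ (by linarith)
        have : t * Cq ψ ≤ s * Cq ψ := mul_le_mul_of_nonneg_right (by linarith) hCp.le
        linarith
      have h3 := mul_le_mul_of_nonneg_left (i1.trans i2) hμ0.le
      nlinarith [hteq]
    linarith
  exact le_antisymm hu2 hu1
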